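/- Let d = 2m+1 be odd, let U, w ≥ 1 and γ ∈ (0,1) satisfy w·γ² ≥ 3, and let f : Fin U → ℕ be a frequency function with total count N = Σ_y f(y) ≥ 1; fix an item x ∈ Fin U. Let (h_r(y))_{r ∈ Fin d, y ∈ Fin U} be i.i.d. uniform on Fin w and (g_r(y))_{r ∈ Fin d, y ∈ Fin U} be i.i.d. uniform on {−1,+1}, mutually independent. Define the CountSketch estimate f̃(x) = median_{r ∈ Fin d} g_r(x)·Σ_{y ∈ Fin U} f(y)·g_r(y)·1{h_r(y) = h_r(x)}. Then P( |f̃(x) − f(x)| > γ·N ) ≤ exp(−d/18). -/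

import Mathlib

open MeasureTheory ProbabilityTheory Real
open scoped ENNReal NNReal

/-- The median of a tuple of `2m+1` reals: its `(m+1)`-st smallest entry with multiplicity. -/
noncomputable def median {m : ℕ} (a : Fin (2 * m + 1) → ℝ) : ℝ :=
  (Multiset.sort (Multiset.map a Finset.univ.val) (· ≤ ·))[m]'(by
    simp [Multiset.length_sort]; omega)

/-- Codomain of the combined family: hash values live in `Fin w`, sign values in `ℝ`. -/
def Codom (ι : Type) (w : ℕ) : ι ⊕ ι → Type
  | .inl _ => Fin w
  | .inr _ => ℝ

instance {ι : Type} {w : ℕ} (i : ι ⊕ ι) : MeasurableSpace (Codom ι w i) :=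
  match i with
  | .inl _ => inferInstanceAs (MeasurableSpace (Fin w))
  | .inr _ => inferInstanceAs (MeasurableSpace ℝ)

/-- The combined family of the hash variables and the sign variables. -/
def Vars {Ω : Type*} {ι : Type} {w : ℕ} (H : ι → Ω → Fin w) (G : ι → Ω → ℝ) :
    ∀ i : ι ⊕ ι, Ω → Codom ι w i
  | .inl p => H p
  | .inr p => G p

/- ### Auxiliary lemmas -/

lemma median_count {m : ℕ} (a : Fin (2 * m + 1) → ℝ) (c t : ℝ)
    (hmed : t < |median a - c|) :
    m + 1 ≤ (Finset.univ.filter (fun r => t < |a r - c|)).card := by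
  classical
  set p : ℝ → Prop := fun b => t < |b - c| with hp
  set l : List ℝ := Multiset.sort (Multiset.map a Finset.univ.val) (· ≤ ·) with hl
  have hlen : l.length = 2 * m + 1 := by simp [hl, Multiset.length_sort]
  have hsort : l.Pairwise (· ≤ ·) := Multiset.pairwise_sort _ _
  have hmlt : m < l.length := by omega
  have hmedl : median a = l[m]'hmlt := rfl
  have hmono : ∀ (i j : ℕ) (hi : i < l.length) (hj : j < l.length), i ≤ j →
      l[i]'hi ≤ l[j]'hj := by
    intro i j hi hj hij
    have := hsort.rel_get_of_le (a := ⟨i, hi⟩) (b := ⟨j, hj⟩) (by simp [Fin.mk_le_mk, hij])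
    simpa [List.get_eq_getElem] using this
  have hcard : (Finset.univ.filter (fun r => t < |a r - c|)).card
      = l.countP (fun b => decide (p b)) := by
    have e1 : (Finset.univ.filter (fun r => t < |a r - c|)).card
        = Multiset.card (Multiset.filter (fun r => p (a r)) Finset.univ.val) := rfl
    have e2 : Multiset.countP p (Multiset.map a Finset.univ.val)
        = l.countP (fun b => decide (p b)) := by
      rw [← Multiset.sort_eq (Multiset.map a Finset.univ.val) (· ≤ ·), ← hl,
        Multiset.coe_countP]
    rw [e1, ← Multiset.countP_map a Finset.univ.val p, e2]
  rw [hcard]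
  rcases lt_abs.mp hmed with hcase | hcase
  · have hdroplen : (l.drop m).length = m + 1 := by simp [hlen]; omega
    have hdrop : (l.drop m).countP (fun b => decide (p b)) = m + 1 := by
      rw [List.countP_eq_length.mpr, hdroplen]
      intro b hb
      obtain ⟨i, hilt, hi⟩ := List.mem_iff_getElem.mp hb
      have hilt' : m + i < l.length := by rw [List.length_drop] at hilt; omega
      have hbe : b = l[m+i]'hilt' := by rw [← hi, List.getElem_drop']
      have hle : l[m]'hmlt ≤ l[m+i]'hilt' := hmono _ _ _ _ (by omega)
      have : t < b - c := by rw [hbe]; rw [hmedl] at hcase; linarith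
      simpa [hp] using lt_of_lt_of_le this (le_abs_self _)
    calc m + 1 = (l.drop m).countP (fun b => decide (p b)) := hdrop.symm
      _ ≤ l.countP (fun b => decide (p b)) := by
          conv_rhs => rw [← List.take_append_drop m l]
          rw [List.countP_append]; omega
  · have htakelen : (l.take (m+1)).length = m + 1 := by simp [hlen]; omega
    have htake : (l.take (m+1)).countP (fun b => decide (p b)) = m + 1 := by
      rw [List.countP_eq_length.mpr, htakelen]
      intro b hb
      obtain ⟨i, hilt, hi⟩ := List.mem_iff_getElem.mp hb
      have hilt0 : i < m + 1 := by rw [htakelen] at hilt; omega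
      have hilt' : i < l.length := by omega
      have hbe : b = l[i]'hilt' := by rw [← hi, List.getElem_take]
      have hle : l[i]'hilt' ≤ l[m]'hmlt := hmono _ _ _ _ (by omega)
      have : t < -(b - c) := by rw [hbe]; rw [hmedl] at hcase; simp at hcase ⊢; linarith
      simpa [hp] using lt_of_lt_of_le this (neg_le_abs _)
    calc m + 1 = (l.take (m+1)).countP (fun b => decide (p b)) := htake.symm
      _ ≤ l.countP (fun b => decide (p b)) := by
          conv_rhs => rw [← List.take_append_drop (m+1) l]
          rw [List.countP_append]; omega

lemma real_ineq (m : ℕ) :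
    (4/3 : ℝ)^(2*m+1) ≤ 2^(m+1) * Real.exp (-((2*m+1 : ℕ) : ℝ)/18) := by
  have h9 : (16/9 : ℝ) ≤ 2 * Real.exp (-(1/9)) := by
    have := Real.add_one_le_exp (-(1/9) : ℝ); linarith
  have h18 : (4/3 : ℝ) ≤ 2 * Real.exp (-(1/18)) := by
    have := Real.add_one_le_exp (-(1/18) : ℝ); linarith
  have e1 : (4/3 : ℝ)^(2*m+1) = (16/9)^m * (4/3) := by
    rw [pow_succ, pow_mul]; norm_num
  have e2 : (2:ℝ)^(m+1) * Real.exp (-((2*m+1 : ℕ) : ℝ)/18)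
      = (2 * Real.exp (-(1/9)))^m * (2 * Real.exp (-(1/18))) := by
    have hh : -((2*m+1 : ℕ) : ℝ)/18 = (m : ℝ) * (-(1/9)) + (-(1/18)) := by push_cast; ring
    rw [hh, Real.exp_add, Real.exp_nat_mul, pow_succ, mul_pow]; ring
  rw [e1, e2]
  exact mul_le_mul (pow_le_pow_left₀ (by norm_num) h9 m) h18 (by norm_num) (by positivity)

/- ### Gymnastics for tuples of variables indexed by finsets -/

def RowIdx {d U : ℕ} (r : Fin d) : Finset ((Fin d × Fin U) ⊕ (Fin d × Fin U)) :=
  (Finset.univ.image fun y => Sum.inl (r,y)) ∪ (Finset.univ.image fun y => Sum.inr (r,y))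

lemma memRowL {d U : ℕ} (r : Fin d) (y : Fin U) : Sum.inl (r,y) ∈ RowIdx (U := U) r := by
  simp [RowIdx]

lemma memRowR {d U : ℕ} (r : Fin d) (y : Fin U) : Sum.inr (r,y) ∈ RowIdx (U := U) r := by
  simp [RowIdx]

lemma rowIdx_fst {d U : ℕ} {r : Fin d} {i : (Fin d × Fin U) ⊕ (Fin d × Fin U)}
    (hi : i ∈ RowIdx (U := U) r) : Sum.elim Prod.fst Prod.fst i = r := by
  simp [RowIdx] at hi
  rcases hi with ⟨y, hy⟩ | ⟨y, hy⟩ <;> subst hy <;> rfl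

def gofR {ι : Type} {w : ℕ} {T : Finset (ι ⊕ ι)} (v : ∀ i : T, Codom ι w i.1)
    (p : ι) (hp : Sum.inr p ∈ T) : ℝ := v ⟨Sum.inr p, hp⟩

def hofL {ι : Type} {w : ℕ} {T : Finset (ι ⊕ ι)} (v : ∀ i : T, Codom ι w i.1)
    (p : ι) (hp : Sum.inl p ∈ T) : Fin w := v ⟨Sum.inl p, hp⟩

lemma measurable_gofR {ι : Type} {w : ℕ} {T : Finset (ι ⊕ ι)} (p : ι) (hp : Sum.inr p ∈ T) :
    Measurable (fun v : ∀ i : T, Codom ι w i.1 => gofR v p hp) :=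
  measurable_pi_apply _

lemma measurable_hofL {ι : Type} {w : ℕ} {T : Finset (ι ⊕ ι)} (p : ι) (hp : Sum.inl p ∈ T) :
    Measurable (fun v : ∀ i : T, Codom ι w i.1 => hofL v p hp) :=
  measurable_pi_apply _

noncomputable def estRow {d U : ℕ} (w : ℕ) (f : Fin U → ℕ) (x : Fin U) (r : Fin d)
    (v : ∀ i : (RowIdx (U := U) r : Finset _), Codom (Fin d × Fin U) w i.1) : ℝ :=
  gofR v (r,x) (memRowR r x) *
    ∑ y, (f y : ℝ) * gofR v (r,y) (memRowR r y) *
      (if hofL v (r,y) (memRowL r y) = hofL v (r,x) (memRowL r x) then 1 else 0)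

lemma measurable_estRow {d U : ℕ} (w : ℕ) (f : Fin U → ℕ) (x : Fin U) (r : Fin d) :
    Measurable (estRow (d := d) w f x r) := by
  unfold estRow
  apply Measurable.mul (measurable_gofR _ _)
  apply Finset.measurable_sum
  intro y _
  apply Measurable.mul
  · exact measurable_const.mul (measurable_gofR _ _)
  · apply Measurable.ite _ measurable_const measurable_const
    exact measurableSet_eq_fun (measurable_hofL _ _) (measurable_hofL _ _)

def restr {d U : ℕ} (w : ℕ) {T1 T2 : Finset ((Fin d × Fin U) ⊕ (Fin d × Fin U))} (hsub : T1 ⊆ T2)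
    (v : ∀ i : T2, Codom (Fin d × Fin U) w i.1) (i : T1) : Codom (Fin d × Fin U) w i.1 :=
  v ⟨i.1, hsub i.2⟩

lemma measurable_restr {d U : ℕ} (w : ℕ) {T1 T2 : Finset ((Fin d × Fin U) ⊕ (Fin d × Fin U))}
    (hsub : T1 ⊆ T2) : Measurable (restr (d := d) (U := U) w hsub) :=
  measurable_pi_lambda _ fun _ => measurable_pi_apply _

/- ### Main theorem -/

/-- For a CountSketch with an odd number `d = 2m+1` of rows and `w` columns
with `w·γ² ≥ 3`, under fully random i.i.d. hashes and signs, the median estimate satisfies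
`P(|f̃(x) - f(x)| > γ·N) ≤ exp(-d/18)`. -/
theorem stmt15 {Ω : Type*} [MeasurableSpace Ω] (P : Measure Ω) [IsProbabilityMeasure P]
    (m U w : ℕ) (hU : 1 ≤ U) (hw : 1 ≤ w)
    (γ : ℝ) (hγ : γ ∈ Set.Ioo (0 : ℝ) 1) (hwγ : 3 ≤ w * γ ^ 2)
    (f : Fin U → ℕ) (N : ℕ) (hN : N = ∑ y : Fin U, f y) (hN1 : 1 ≤ N)
    (x : Fin U)
    (h : Fin (2 * m + 1) × Fin U → Ω → Fin w)
    (g : Fin (2 * m + 1) × Fin U → Ω → ℝ)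
    (hmeas : ∀ i, Measurable (Vars h g i))
    (hindep : iIndepFun (Vars h g) P)
    (hdisth : ∀ p, Measure.map (h p) P = (w : ℝ≥0∞)⁻¹ • Measure.count)
    (hdistg : ∀ p, Measure.map (g p) P
      = (2 : ℝ≥0∞)⁻¹ • (Measure.dirac (1 : ℝ) + Measure.dirac (-1 : ℝ)))
    (ftilde : Ω → ℝ)
    (hft : ∀ ω, ftilde ω = median (fun r : Fin (2 * m + 1) =>
      g (r, x) ω * ∑ y : Fin U, (f y : ℝ) * g (r, y) ω
        * (if h (r, y) ω = h (r, x) ω then 1 else 0))) :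
    P {ω | γ * N < |ftilde ω - (f x : ℝ)|}
      ≤ ENNReal.ofReal (Real.exp (-((2 * m + 1 : ℕ) : ℝ) / 18)) := by
  classical
  obtain ⟨hγ0, hγ1⟩ := hγ
  have hgm : ∀ p, Measurable (g p) := fun p => hmeas (.inr p)
  have hhm : ∀ p, Measurable (h p) := fun p => hmeas (.inl p)
  have hN0 : (0:ℝ) < N := by exact_mod_cast hN1
  have hw0 : (0:ℝ) < w := by exact_mod_cast hw
  have hγN : (0:ℝ) < γ * N := by positivity
  set I : Fin (2*m+1) → Fin U → Ω → ℝ :=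
    fun r y ω => if h (r,y) ω = h (r,x) ω then 1 else 0 with hIdef
  set X : Fin (2*m+1) → Ω → ℝ :=
    fun r ω => g (r,x) ω * ∑ y, (f y : ℝ) * g (r,y) ω * I r y ω with hXdef
  set A : Fin (2*m+1) → Set Ω := fun r => {ω | γ * N < |X r ω - (f x : ℝ)|} with hAdef
  have hIm : ∀ r y, Measurable (I r y) := by
    intro r y
    rw [hIdef]
    exact Measurable.ite (measurableSet_eq_fun (hhm _) (hhm _))
      measurable_const measurable_const
  have hIbd : ∀ r y ω, |I r y ω| ≤ 1 := by
    intro r y ω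
    rw [hIdef]
    dsimp only
    split_ifs <;> norm_num
  have hXm : ∀ r, Measurable (X r) := by
    intro r
    rw [hXdef]
    exact (hgm _).mul
      (Finset.measurable_sum _ fun y _ => (measurable_const.mul (hgm _)).mul (hIm r y))
  have hAm : ∀ r, MeasurableSet (A r) := by
    intro r
    rw [hAdef]
    exact measurableSet_lt measurable_const ((hXm r).sub measurable_const).abs
  -- almost everywhere, all signs are ±1
  have hgood : ∀ᵐ ω ∂P, ∀ p : Fin (2*m+1) × Fin U, |g p ω| = 1 := by
    rw [ae_all_iff]
    intro p
    have hs : MeasurableSet ({-1,1}ᶜ : Set ℝ) :=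
      ((measurableSet_singleton (1:ℝ)).insert (-1)).compl
    have h0 : P (g p ⁻¹' ({-1,1}ᶜ : Set ℝ)) = 0 := by
      rw [← Measure.map_apply (hgm p) hs, hdistg p]
      rw [Measure.smul_apply, Measure.add_apply,
        Measure.dirac_apply' _ hs, Measure.dirac_apply' _ hs]
      simp [Set.indicator_apply]
    have hmem : ∀ᵐ ω ∂P, g p ω ∈ ({-1,1} : Set ℝ) := by
      rw [ae_iff]
      exact h0
    filter_upwards [hmem] with ω hω
    rcases hω with h1 | h1 <;> rw [h1] <;> norm_num
  -- Step B : each row is good with probability ≥ 2/3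
  have hrow : ∀ r, P (A r) ≤ ENNReal.ofReal (1/3) := by
    intro r
    set FF : Fin U → Ω → ℝ := fun y ω => (f y : ℝ) * g (r,y) ω * I r y ω with hFFdef
    set D : Ω → ℝ := fun ω => ∑ y ∈ Finset.univ.erase x, FF y ω with hDdef
    have hFFm : ∀ y, Measurable (FF y) := by
      intro y; rw [hFFdef]; exact (measurable_const.mul (hgm _)).mul (hIm r y)
    have hDm : Measurable D := by
      rw [hDdef]; exact Finset.measurable_sum _ fun y _ => hFFm y
    have hfyN : ∀ y : Fin U, (f y : ℝ) ≤ N := by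
      intro y
      have : f y ≤ N := hN ▸ Finset.single_le_sum (fun i _ => Nat.zero_le _) (Finset.mem_univ y)
      exact_mod_cast this
    -- pointwise identity on the good set
    have hXD : ∀ᵐ ω ∂P, |X r ω - (f x : ℝ)| = |D ω| := by
      filter_upwards [hgood] with ω hω
      have hsplit : ∑ y, FF y ω = D ω + FF x ω := by
        rw [hDdef]
        exact (Finset.sum_erase_add _ _ (Finset.mem_univ x)).symm
      have hgx : g (r,x) ω * g (r,x) ω = 1 := by
        rw [← abs_mul_abs_self, hω (r,x)]; norm_num
      have hIx : I r x ω = 1 := by rw [hIdef]; simp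
      have hXval : X r ω = g (r,x) ω * (D ω + FF x ω) := by
        rw [hXdef]
        dsimp only
        rw [← hsplit]
      have hFFx : FF x ω = (f x : ℝ) * g (r,x) ω := by
        rw [hFFdef]; dsimp only; rw [hIx]; ring
      have : X r ω - (f x : ℝ) = g (r,x) ω * D ω := by
        rw [hXval, hFFx]
        have : g (r,x) ω * ((f x : ℝ) * g (r,x) ω) = (f x : ℝ) := by
          calc g (r,x) ω * ((f x : ℝ) * g (r,x) ω)
              = (f x : ℝ) * (g (r,x) ω * g (r,x) ω) := by ring
            _ = (f x : ℝ) := by rw [hgx]; ring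
        rw [mul_add, this]; ring
      rw [this, abs_mul, hω (r,x), one_mul]
    -- integrability of products
    have hFFbd : ∀ᵐ ω ∂P, ∀ y, |FF y ω| ≤ (f y : ℝ) := by
      filter_upwards [hgood] with ω hω y
      rw [hFFdef]
      dsimp only
      rw [abs_mul, abs_mul, hω (r,y), abs_of_nonneg (Nat.cast_nonneg _), mul_one]
      calc (f y : ℝ) * |I r y ω| ≤ (f y : ℝ) * 1 :=
          mul_le_mul_of_nonneg_left (hIbd r y ω) (Nat.cast_nonneg _)
        _ = (f y : ℝ) := mul_one _
    have hint : ∀ y z : Fin U, Integrable (fun ω => FF y ω * FF z ω) P := by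
      intro y z
      refine (integrable_const ((f y : ℝ) * (f z : ℝ))).mono'
        ((hFFm y).mul (hFFm z)).aestronglyMeasurable ?_
      filter_upwards [hFFbd] with ω hω
      rw [norm_mul]
      exact mul_le_mul (hω y) (hω z) (abs_nonneg _)
        (Nat.cast_nonneg _)
    -- expectation of a single sign is 0
    have hdint : ∀ c : ℝ, Integrable (fun t : ℝ => t) (Measure.dirac c) := by
      intro c
      constructor
      · exact aestronglyMeasurable_id
      · rw [HasFiniteIntegral, lintegral_dirac]
        exact ENNReal.coe_lt_top
    have hEg : ∀ p : Fin (2*m+1) × Fin U, ∫ ω, g p ω ∂P = 0 := by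
      intro p
      have : ∫ ω, g p ω ∂P = ∫ t, t ∂(Measure.map (g p) P) :=
        (integral_map (hgm p).aemeasurable aestronglyMeasurable_id).symm
      rw [this, hdistg p, integral_smul_measure,
        integral_add_measure (hdint 1) (hdint (-1)), integral_dirac, integral_dirac]
      norm_num
    -- the probability of a hash collision is 1/w
    have hPcol : ∀ y : Fin U, y ≠ x → P {ω | h (r,y) ω = h (r,x) ω} = (w : ℝ≥0∞)⁻¹ := by
      intro y hyx
      have hne : (Sum.inl (r,y) : (Fin (2*m+1) × Fin U) ⊕ (Fin (2*m+1) × Fin U))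
          ≠ Sum.inl (r,x) := by
        simp [Prod.ext_iff]
        exact hyx
      have hind2 : IndepFun (h (r,y)) (h (r,x)) P := hindep.indepFun hne
      have hset : {ω | h (r,y) ω = h (r,x) ω}
          = ⋃ k : Fin w, (h (r,y) ⁻¹' {k} ∩ h (r,x) ⁻¹' {k}) := by
        ext ω
        simp only [Set.mem_setOf_eq, Set.mem_iUnion, Set.mem_inter_iff, Set.mem_preimage,
          Set.mem_singleton_iff]
        constructor
        · intro hh; exact ⟨h (r,x) ω, hh, rfl⟩
        · rintro ⟨k, h1, h2⟩; rw [h1, h2]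
      have hsingle : ∀ (p : Fin (2*m+1) × Fin U) (k : Fin w),
          P (h p ⁻¹' {k}) = (w : ℝ≥0∞)⁻¹ := by
        intro p k
        rw [← Measure.map_apply (hhm p) (measurableSet_singleton k), hdisth p,
          Measure.smul_apply, Measure.count_singleton]
        simp
      rw [hset, measure_iUnion]
      · have : ∀ k : Fin w, P (h (r,y) ⁻¹' {k} ∩ h (r,x) ⁻¹' {k})
            = (w : ℝ≥0∞)⁻¹ * (w : ℝ≥0∞)⁻¹ := by
          intro k
          rw [hind2.measure_inter_preimage_eq_mul _ _ (measurableSet_singleton k)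
            (measurableSet_singleton k), hsingle, hsingle]
        rw [tsum_fintype]
        simp only [this, Finset.sum_const, Finset.card_univ, Fintype.card_fin, nsmul_eq_mul]
        have hwne : (w : ℝ≥0∞) ≠ 0 := by
          simp; omega
        rw [← mul_assoc, ENNReal.mul_inv_cancel hwne (ENNReal.natCast_ne_top w), one_mul]
      · intro k k' hkk'
        simp only [Function.onFun]
        apply Set.disjoint_left.mpr
        intro ω hω hω'
        simp only [Set.mem_inter_iff, Set.mem_preimage, Set.mem_singleton_iff] at hω hω'
        exact hkk' (by rw [← hω.2, hω'.2])
      · intro k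
        exact ((hhm _) (measurableSet_singleton k)).inter ((hhm _) (measurableSet_singleton k))
    have hSmeas : ∀ y, MeasurableSet {ω | h (r,y) ω = h (r,x) ω} := fun y =>
      measurableSet_eq_fun (hhm _) (hhm _)
    -- expectation of a single collision indicator
    have hEI : ∀ y : Fin U, y ≠ x → ∫ ω, I r y ω ∂P = (w:ℝ)⁻¹ := by
      intro y hyx
      have hind : (fun ω => I r y ω)
          = Set.indicator {ω | h (r,y) ω = h (r,x) ω} (fun _ => (1:ℝ)) := by
        funext ω
        rw [Set.indicator_apply]
        by_cases hc : h (r,y) ω = h (r,x) ω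
        · rw [hIdef]; simp [hc]
        · rw [hIdef]; simp [hc]
      rw [hind, integral_indicator_const (1:ℝ) (hSmeas y), measureReal_def, hPcol y hyx]
      simp
    -- diagonal terms
    have hdiag : ∀ y : Fin U, y ≠ x → ∫ ω, FF y ω * FF y ω ∂P = (f y:ℝ)^2 * (w:ℝ)⁻¹ := by
      intro y hyx
      have hcong : (fun ω => FF y ω * FF y ω) =ᵐ[P] (fun ω => (f y:ℝ)^2 * I r y ω) := by
        filter_upwards [hgood] with ω hω
        have hgg : g (r,y) ω * g (r,y) ω = 1 := by
          rw [← abs_mul_abs_self, hω (r,y)]; norm_num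
        have hII : I r y ω * I r y ω = I r y ω := by
          rw [hIdef]; dsimp only; split_ifs <;> norm_num
        calc FF y ω * FF y ω
            = (f y:ℝ)^2 * (g (r,y) ω * g (r,y) ω) * (I r y ω * I r y ω) := by
              rw [hFFdef]; ring
          _ = (f y:ℝ)^2 * I r y ω := by rw [hgg, hII]; ring
      rw [integral_congr_ae hcong, integral_const_mul, hEI y hyx]
    -- off-diagonal terms vanish
    have hoff : ∀ y z : Fin U, y ≠ x → z ≠ x → y ≠ z →
        ∫ ω, FF y ω * FF z ω ∂P = 0 := by
      intro y z hyx hzx hyz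
      set T1 : Finset ((Fin (2*m+1) × Fin U) ⊕ (Fin (2*m+1) × Fin U)) :=
        {Sum.inr (r,z), Sum.inl (r,y), Sum.inl (r,z), Sum.inl (r,x)} with hT1
      have hm1 : Sum.inr (r,z) ∈ T1 := by simp [hT1]
      have hm2 : Sum.inl (r,y) ∈ T1 := by simp [hT1]
      have hm3 : Sum.inl (r,z) ∈ T1 := by simp [hT1]
      have hm4 : Sum.inl (r,x) ∈ T1 := by simp [hT1]
      have hdisj : Disjoint ({Sum.inr (r,y)} : Finset _) T1 := by
        simp [hT1, Finset.disjoint_left, Prod.ext_iff]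
        exact fun hh => hyz hh
      set W : Ω → ℝ := fun ω => g (r,z) ω * (I r y ω * I r z ω) with hWdef
      have hWm : Measurable W := by
        rw [hWdef]; exact (hgm _).mul ((hIm r y).mul (hIm r z))
      have hWind : IndepFun (g (r,y)) W P := by
        have hψ : Measurable (fun v : ∀ i : (T1 : Finset _), Codom (Fin (2*m+1) × Fin U) w i.1 =>
            gofR v (r,z) hm1 * ((if hofL v (r,y) hm2 = hofL v (r,x) hm4 then (1:ℝ) else 0)
              * (if hofL v (r,z) hm3 = hofL v (r,x) hm4 then (1:ℝ) else 0))) := by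
          apply (measurable_gofR _ _).mul
          apply Measurable.mul
          · exact Measurable.ite
              (measurableSet_eq_fun (measurable_hofL _ _) (measurable_hofL _ _))
              measurable_const measurable_const
          · exact Measurable.ite
              (measurableSet_eq_fun (measurable_hofL _ _) (measurable_hofL _ _))
              measurable_const measurable_const
        have hcomp := (hindep.indepFun_finset {Sum.inr (r,y)} T1 hdisj hmeas).comp
          (measurable_gofR (T := {Sum.inr (r,y)}) (r,y) (Finset.mem_singleton_self _)) hψ
        exact hcomp
      have hsplitfun : (fun ω => FF y ω * FF z ω)
          = (fun ω => ((f y:ℝ)*(f z:ℝ)) * ((g (r,y)) * W) ω) := by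
        funext ω
        rw [hFFdef, hWdef]
        simp only [Pi.mul_apply]
        ring
      rw [hsplitfun, integral_const_mul,
        IndepFun.integral_mul_eq_mul_integral hWind (hgm (r,y)).aestronglyMeasurable hWm.aestronglyMeasurable,
        hEg (r,y)]
      ring
    -- expansion of the second moment
    have hexp : ∫ ω, D ω^2 ∂P
        = ∑ y ∈ Finset.univ.erase x, ((f y:ℝ)^2 * (w:ℝ)⁻¹) := by
      have hpt : ∀ ω, D ω^2 = ∑ y ∈ Finset.univ.erase x,
          ∑ z ∈ Finset.univ.erase x, FF y ω * FF z ω := by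
        intro ω
        rw [hDdef]; dsimp only; rw [sq, Finset.sum_mul_sum]
      calc ∫ ω, D ω^2 ∂P
          = ∫ ω, ∑ y ∈ Finset.univ.erase x, ∑ z ∈ Finset.univ.erase x, FF y ω * FF z ω ∂P := by
            exact integral_congr_ae (Filter.Eventually.of_forall hpt)
        _ = ∑ y ∈ Finset.univ.erase x, ∫ ω, ∑ z ∈ Finset.univ.erase x, FF y ω * FF z ω ∂P := by
            exact integral_finset_sum _ fun y _ => integrable_finset_sum _ fun z _ => hint y z
        _ = ∑ y ∈ Finset.univ.erase x, ∑ z ∈ Finset.univ.erase x, ∫ ω, FF y ω * FF z ω ∂P := by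
            exact Finset.sum_congr rfl fun y _ => integral_finset_sum _ fun z _ => hint y z
        _ = ∑ y ∈ Finset.univ.erase x, ((f y:ℝ)^2 * (w:ℝ)⁻¹) := by
            apply Finset.sum_congr rfl
            intro y hy
            have hyx : y ≠ x := Finset.ne_of_mem_erase hy
            rw [Finset.sum_eq_single_of_mem y hy]
            · exact hdiag y hyx
            · intro z hz hzy
              exact hoff y z hyx (Finset.ne_of_mem_erase hz) (Ne.symm hzy)
    -- second moment bound
    have hD2bd : ∫ ω, D ω^2 ∂P ≤ (N:ℝ)^2 * (w:ℝ)⁻¹ := by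
      rw [hexp, ← Finset.sum_mul]
      apply mul_le_mul_of_nonneg_right _ (by positivity)
      calc ∑ y ∈ Finset.univ.erase x, (f y:ℝ)^2
          ≤ ∑ y ∈ Finset.univ.erase x, (f y:ℝ) * (N:ℝ) := by
            apply Finset.sum_le_sum
            intro y _
            rw [sq]
            exact mul_le_mul_of_nonneg_left (hfyN y) (Nat.cast_nonneg _)
        _ ≤ ∑ y : Fin U, (f y:ℝ) * (N:ℝ) := by
            apply Finset.sum_le_sum_of_subset_of_nonneg (Finset.erase_subset _ _)
            intro y _ _
            positivity
        _ = (N:ℝ)^2 := by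
            rw [← Finset.sum_mul, sq]
            congr 1
            rw [hN]
            push_cast
            ring
    -- integrability of D^2
    have hDint : Integrable (fun ω => D ω^2) P := by
      refine (integrable_const ((N:ℝ)^2)).mono'
        ((hDm.pow_const 2).aestronglyMeasurable) ?_
      filter_upwards [hFFbd] with ω hω
      have hDb : |D ω| ≤ (N:ℝ) := by
        rw [hDdef]
        dsimp only
        calc |∑ y ∈ Finset.univ.erase x, FF y ω|
            ≤ ∑ y ∈ Finset.univ.erase x, |FF y ω| := Finset.abs_sum_le_sum_abs _ _
          _ ≤ ∑ y ∈ Finset.univ.erase x, (f y:ℝ) := Finset.sum_le_sum fun y _ => hω y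
          _ ≤ ∑ y : Fin U, (f y:ℝ) :=
              Finset.sum_le_sum_of_subset_of_nonneg (Finset.erase_subset _ _)
                fun y _ _ => Nat.cast_nonneg _
          _ = (N:ℝ) := by rw [hN]; push_cast; ring
      have hnm : ‖D ω^2‖ = |D ω|^2 := by rw [Real.norm_eq_abs, abs_pow]
      rw [hnm]
      exact pow_le_pow_left₀ (abs_nonneg _) hDb 2
    -- Chebyshev
    have hcheb : P (A r) ≤ ENNReal.ofReal ((N:ℝ)^2 * (w:ℝ)⁻¹) / ENNReal.ofReal ((γ*N)^2) := by
      have hsub2 : P (A r) ≤ P {ω | ENNReal.ofReal ((γ*N)^2) ≤ ENNReal.ofReal (D ω^2)} := by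
        apply measure_mono_ae
        filter_upwards [hXD] with ω hXDω hmem
        have h1 : γ * N < |D ω| := by
          rw [← hXDω]
          exact hmem
        show ENNReal.ofReal ((γ*N)^2) ≤ ENNReal.ofReal (D ω^2)
        apply ENNReal.ofReal_le_ofReal
        calc (γ*(N:ℝ))^2 = |γ*(N:ℝ)|^2 := by rw [abs_of_pos hγN]
          _ ≤ |D ω|^2 := by
              apply pow_le_pow_left₀ (abs_nonneg _)
              rw [abs_of_pos hγN]
              exact le_of_lt h1
          _ = D ω^2 := sq_abs _
      have hmark := mul_meas_ge_le_lintegral₀ (μ := P)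
        (f := fun ω => ENNReal.ofReal (D ω^2))
        (ENNReal.measurable_ofReal.comp (hDm.pow_const 2)).aemeasurable
        (ENNReal.ofReal ((γ*N)^2))
      have hlint : ∫⁻ ω, ENNReal.ofReal (D ω^2) ∂P = ENNReal.ofReal (∫ ω, D ω^2 ∂P) :=
        (ofReal_integral_eq_lintegral_ofReal hDint
          (Filter.Eventually.of_forall fun ω => sq_nonneg _)).symm
      have hPA : ENNReal.ofReal ((γ*N)^2) * P (A r)
          ≤ ENNReal.ofReal ((N:ℝ)^2 * (w:ℝ)⁻¹) := by
        calc ENNReal.ofReal ((γ*N)^2) * P (A r)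
            ≤ ENNReal.ofReal ((γ*N)^2)
              * P {ω | ENNReal.ofReal ((γ*N)^2) ≤ ENNReal.ofReal (D ω^2)} :=
              mul_le_mul_right hsub2 _
          _ ≤ ∫⁻ ω, ENNReal.ofReal (D ω^2) ∂P := hmark
          _ = ENNReal.ofReal (∫ ω, D ω^2 ∂P) := hlint
          _ ≤ ENNReal.ofReal ((N:ℝ)^2 * (w:ℝ)⁻¹) := ENNReal.ofReal_le_ofReal hD2bd
      rw [ENNReal.le_div_iff_mul_le
        (Or.inl (ENNReal.ofReal_pos.mpr (by positivity)).ne')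
        (Or.inl ENNReal.ofReal_ne_top)]
      rw [mul_comm]
      exact hPA
    calc P (A r) ≤ ENNReal.ofReal ((N:ℝ)^2 * (w:ℝ)⁻¹) / ENNReal.ofReal ((γ*N)^2) := hcheb
      _ = ENNReal.ofReal ((N:ℝ)^2 * (w:ℝ)⁻¹ / (γ*N)^2) := by
          rw [ENNReal.ofReal_div_of_pos (by positivity)]
      _ ≤ ENNReal.ofReal (1/3) := by
          apply ENNReal.ofReal_le_ofReal
          have he : (N:ℝ)^2 * (w:ℝ)⁻¹ / (γ*(N:ℝ))^2 = 1 / ((w:ℝ) * γ^2) := by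
            field_simp
          rw [he]
          exact one_div_le_one_div_of_le (by norm_num) hwγ
  -- Step C : independence across rows
  have hAeq : ∀ r : Fin (2*m+1), A r
      = (fun ω (i : (RowIdx (U := U) r : Finset _)) => Vars h g i.1 ω) ⁻¹'
        {v | γ * N < |estRow w f x r v - (f x : ℝ)|} := by
    intro r
    rfl
  have hBm : ∀ r : Fin (2*m+1),
      MeasurableSet {v : ∀ i : (RowIdx (U := U) r : Finset _),
          Codom (Fin (2*m+1) × Fin U) w i.1 |
        γ * N < |estRow w f x r v - (f x : ℝ)|} := fun r =>
    measurableSet_lt measurable_const ((measurable_estRow w f x r).sub measurable_const).abs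
  have hprodbd : ∀ S : Finset (Fin (2*m+1)),
      P (⋂ r ∈ S, A r) ≤ ENNReal.ofReal (1/3) ^ S.card := by
    intro S
    induction S using Finset.induction_on with
    | empty => simp
    | @insert r0 S hr0 ih =>
      rw [Finset.card_insert_of_notMem hr0, Finset.set_biInter_insert]
      have hsub : ∀ r ∈ S, RowIdx (U := U) r ⊆ S.biUnion (RowIdx (U := U)) :=
        fun r hr => Finset.subset_biUnion_of_mem _ hr
      have hdisj : Disjoint (RowIdx (U := U) r0) (S.biUnion (RowIdx (U := U))) := by
        rw [Finset.disjoint_left]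
        intro i hi0 hiU
        rcases Finset.mem_biUnion.mp hiU with ⟨r, hrS, hir⟩
        have h1 := rowIdx_fst hi0
        have h2 := rowIdx_fst hir
        have : r0 = r := by rw [← h1, h2]
        rw [this] at hr0
        exact hr0 hrS
      have hind := hindep.indepFun_finset _ _ hdisj hmeas
      set C : Set (∀ i : (S.biUnion (RowIdx (U := U)) : Finset _),
          Codom (Fin (2*m+1) × Fin U) w i.1) :=
        ⋂ r, ⋂ (hr : r ∈ S), (restr w (hsub r hr)) ⁻¹'
          {v | γ * N < |estRow w f x r v - (f x : ℝ)|} with hCdef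
      have hCm : MeasurableSet C := by
        rw [hCdef]
        exact MeasurableSet.iInter fun r => MeasurableSet.iInter fun hr =>
          (measurable_restr w (hsub r hr)) (hBm r)
      have hCeq : (⋂ r ∈ S, A r)
          = (fun ω (i : (S.biUnion (RowIdx (U := U)) : Finset _)) => Vars h g i.1 ω) ⁻¹' C := by
        ext ω
        rw [hCdef]
        simp only [Set.mem_iInter, Set.mem_preimage, Set.mem_setOf_eq]
        constructor
        · intro hh r hr
          have hthis := hh r hr
          rw [hAeq r] at hthis
          exact hthis
        · intro hh r hr
          rw [hAeq r]
          exact hh r hr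
      have hkey : P (A r0 ∩ ⋂ r ∈ S, A r) = P (A r0) * P (⋂ r ∈ S, A r) := by
        rw [hAeq r0, hCeq]
        exact hind.measure_inter_preimage_eq_mul _ _ (hBm r0) hCm
      calc P (A r0 ∩ ⋂ r ∈ S, A r) = P (A r0) * P (⋂ r ∈ S, A r) := hkey
        _ ≤ ENNReal.ofReal (1/3) * ENNReal.ofReal (1/3) ^ S.card :=
            mul_le_mul' (hrow r0) ih
        _ = ENNReal.ofReal (1/3) ^ (S.card + 1) := by rw [pow_succ, mul_comm]
  -- Step A : median failure forces at least m+1 bad rows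
  have hincl : {ω | γ * N < |ftilde ω - (f x : ℝ)|} ⊆
      ⋃ S ∈ Finset.powersetCard (m+1) (Finset.univ : Finset (Fin (2*m+1))), ⋂ r ∈ S, A r := by
    intro ω hω
    have hω' : γ * N < |median (fun r => X r ω) - (f x : ℝ)| := by
      rw [Set.mem_setOf_eq, hft ω] at hω
      exact hω
    have hcount := median_count (fun r => X r ω) ((f x : ℝ)) (γ * N) hω'
    obtain ⟨S, hSsub, hScard⟩ := Finset.exists_subset_card_eq hcount
    apply Set.mem_iUnion₂.mpr
    refine ⟨S, ?_, ?_⟩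
    · rw [Finset.mem_powersetCard]
      exact ⟨Finset.subset_univ S, hScard⟩
    · apply Set.mem_iInter₂.mpr
      intro r hr
      exact (Finset.mem_filter.mp (hSsub hr)).2
  -- Step D : assemble everything
  set E2 : Set Ω := ⋃ S ∈ Finset.powersetCard (m+1) (Finset.univ : Finset (Fin (2*m+1))),
    ⋂ r ∈ S, A r with hE2def
  have hInterMeas : ∀ S : Finset (Fin (2*m+1)), MeasurableSet (⋂ r ∈ S, A r) := fun S =>
    MeasurableSet.biInter (Finset.countable_toSet S) fun r _ => hAm r
  have hE2m : MeasurableSet E2 := by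
    rw [hE2def]
    exact MeasurableSet.biUnion (Finset.countable_toSet _) fun S _ => hInterMeas S
  have hPE2 : P {ω | γ * N < |ftilde ω - (f x : ℝ)|} ≤ P E2 := measure_mono hincl
  have hpoint : ∀ ω, E2.indicator (fun _ => (2:ℝ≥0∞)^(m+1)) ω
      ≤ ∑ S : Finset (Fin (2*m+1)), (⋂ r ∈ S, A r).indicator (fun _ => (1:ℝ≥0∞)) ω := by
    intro ω
    by_cases hω : ω ∈ E2
    · rw [Set.indicator_of_mem hω]
      set F : Finset (Fin (2*m+1)) := Finset.univ.filter (fun r => ω ∈ A r) with hFdef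
      have hFcard : m + 1 ≤ F.card := by
        rw [hE2def] at hω
        rcases Set.mem_iUnion₂.mp hω with ⟨S0, hS0, hωS0⟩
        rw [Finset.mem_powersetCard] at hS0
        have hsubF : S0 ⊆ F := by
          intro r hr
          rw [hFdef, Finset.mem_filter]
          exact ⟨Finset.mem_univ r, Set.mem_iInter₂.mp hωS0 r hr⟩
        calc m + 1 = S0.card := hS0.2.symm
          _ ≤ F.card := Finset.card_le_card hsubF
      have hval : ∀ S : Finset (Fin (2*m+1)),
          (⋂ r ∈ S, A r).indicator (fun _ => (1:ℝ≥0∞)) ω = if S ⊆ F then 1 else 0 := by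
        intro S
        by_cases hS : S ⊆ F
        · rw [if_pos hS, Set.indicator_of_mem]
          exact Set.mem_iInter₂.mpr fun r hr => (Finset.mem_filter.mp (hS hr)).2
        · rw [if_neg hS, Set.indicator_of_notMem]
          intro hcon
          apply hS
          intro r hr
          rw [hFdef, Finset.mem_filter]
          exact ⟨Finset.mem_univ r, Set.mem_iInter₂.mp hcon r hr⟩
      rw [Finset.sum_congr rfl fun S _ => hval S, Finset.sum_boole]
      have hfilter : Finset.univ.filter (fun S : Finset (Fin (2*m+1)) => S ⊆ F)
          = F.powerset := by
        ext S
        simp [Finset.mem_powerset]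
      rw [hfilter, Finset.card_powerset]
      calc (2:ℝ≥0∞)^(m+1) ≤ (2:ℝ≥0∞)^F.card := by
            exact pow_le_pow_right₀ one_le_two hFcard
        _ = ((2^F.card : ℕ) : ℝ≥0∞) := by push_cast; ring
    · rw [Set.indicator_of_notMem hω]
      exact zero_le
  have hlhs : ∫⁻ ω, E2.indicator (fun _ => (2:ℝ≥0∞)^(m+1)) ω ∂P = 2^(m+1) * P E2 := by
    rw [lintegral_indicator_const hE2m]
  have hrhs : ∫⁻ ω, (∑ S : Finset (Fin (2*m+1)),
      (⋂ r ∈ S, A r).indicator (fun _ => (1:ℝ≥0∞)) ω) ∂P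
      = ∑ S : Finset (Fin (2*m+1)), P (⋂ r ∈ S, A r) := by
    rw [lintegral_finset_sum]
    · exact Finset.sum_congr rfl fun S _ => lintegral_indicator_one (hInterMeas S)
    · intro S _
      exact measurable_const.indicator (hInterMeas S)
  have hmain : (2:ℝ≥0∞)^(m+1) * P E2 ≤ ∑ S : Finset (Fin (2*m+1)), P (⋂ r ∈ S, A r) := by
    rw [← hlhs, ← hrhs]
    exact lintegral_mono hpoint
  have hsum : ∑ S : Finset (Fin (2*m+1)), P (⋂ r ∈ S, A r)
      ≤ (ENNReal.ofReal (1/3) + 1)^(2*m+1) := by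
    calc ∑ S : Finset (Fin (2*m+1)), P (⋂ r ∈ S, A r)
        ≤ ∑ S : Finset (Fin (2*m+1)), ENNReal.ofReal (1/3)^S.card :=
          Finset.sum_le_sum fun S _ => hprodbd S
      _ = ∑ S ∈ (Finset.univ : Finset (Fin (2*m+1))).powerset,
            (∏ _r ∈ S, ENNReal.ofReal (1/3)) * ∏ _r ∈ Finset.univ \ S, (1:ℝ≥0∞) := by
          rw [Finset.powerset_univ]
          exact Finset.sum_congr rfl fun S _ => by
            rw [Finset.prod_const, Finset.prod_const_one, mul_one]
      _ = (ENNReal.ofReal (1/3) + 1)^(2*m+1) := by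
          rw [← Finset.prod_add, Finset.prod_const]
          simp
  have hfinal : (ENNReal.ofReal (1/3) + 1)^(2*m+1)
      ≤ (2:ℝ≥0∞)^(m+1) * ENNReal.ofReal (Real.exp (-((2*m+1:ℕ):ℝ)/18)) := by
    have h43 : (ENNReal.ofReal (1/3) + 1) = ENNReal.ofReal (4/3) := by
      rw [← ENNReal.ofReal_one, ← ENNReal.ofReal_add (by norm_num) (by norm_num)]
      norm_num
    have h2e : (2:ℝ≥0∞) = ENNReal.ofReal 2 := by
      rw [ENNReal.ofReal_ofNat]
    rw [h43, ← ENNReal.ofReal_pow (by norm_num), h2e, ← ENNReal.ofReal_pow (by norm_num),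
      ← ENNReal.ofReal_mul (by positivity)]
    exact ENNReal.ofReal_le_ofReal (real_ineq m)
  have h2ne : ((2:ℝ≥0∞)^(m+1)) ≠ 0 := by
    exact pow_ne_zero _ (by norm_num)
  have h2top : ((2:ℝ≥0∞)^(m+1)) ≠ ⊤ := by
    exact ENNReal.pow_ne_top (by norm_num)
  calc P {ω | γ * N < |ftilde ω - (f x : ℝ)|} ≤ P E2 := hPE2
    _ ≤ ENNReal.ofReal (Real.exp (-((2*m+1:ℕ):ℝ)/18)) := by
        rw [← ENNReal.mul_le_mul_iff_right h2ne h2top]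
        exact hmain.trans (hsum.trans hfinal)
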